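/- Let n ≥ 1, k ≥ 2 with k ≤ 2n, and θ̂₁,...,θ̂_k irrational with ∑_{j=1}^k θ̂_j = (1/2)(k + n/(n+1)). For m = 2(n+1)l + 2L + 1 with l ∈ ℕ, L ∈ ℤ, set Q_L = k/2 + (2L+1)n/(2(n+1)) and ind(m) = m·n/(n+1) + k - 2∑_{j=1}^k {m θ̂_j}. Then ind(m) = 2nl + 2[Q_L] - 2i for an integer i with 0 ≤ i ≤ k-1 if and only if ∑_{j=2}^k {m θ̂_j} lies in the interval I_i(L), where I_0(L) = (0, {Q_L}), I_i(L) = (i-1+{Q_L}, i+{Q_L}) for 1 ≤ i ≤ k-2, and I_{k-1}(L) = (k-2+{Q_L}, k-1), assuming ∑_{j=2}^k {m θ̂_j} is irrational and {Q_L} ∈ (0,1). -/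

import Mathlib

theorem index_interval_criterion (n k : ℕ) (hn : 1 ≤ n) (hk2 : 2 ≤ k) (hk : k ≤ 2 * n)
    (θ : Fin k → ℝ) (hθ : ∀ j, Irrational (θ j))
    (hsum : ∑ j, θ j = (1 / 2) * ((k : ℝ) + (n : ℝ) / (n + 1)))
    (l : ℕ) (L : ℤ) (m : ℤ) (hm : m = 2 * (n + 1) * l + 2 * L + 1)
    (Q S ind : ℝ)
    (hQ : Q = (k : ℝ) / 2 + (2 * (L : ℝ) + 1) * n / (2 * (n + 1)))
    (hS : S = ∑ j ∈ Finset.univ.erase (⟨0, by omega⟩ : Fin k), Int.fract ((m : ℝ) * θ j))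
    (hind : ind = (m : ℝ) * (n : ℝ) / (n + 1) + (k : ℝ)
      - 2 * ∑ j, Int.fract ((m : ℝ) * θ j))
    (hSirr : Irrational S) (hQfr : Int.fract Q ∈ Set.Ioo (0 : ℝ) 1) :
    ∀ i : ℕ, i ≤ k - 1 →
      (ind = 2 * (n : ℝ) * l + 2 * (⌊Q⌋ : ℝ) - 2 * i ↔
        S ∈ (if i = 0 then Set.Ioo (0 : ℝ) (Int.fract Q)
          else if i ≤ k - 2 then Set.Ioo ((i : ℝ) - 1 + Int.fract Q) ((i : ℝ) + Int.fract Q)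
          else Set.Ioo ((k : ℝ) - 2 + Int.fract Q) ((k : ℝ) - 1))) := by
  intro i hi
  have hn1 : (0 : ℝ) < (n : ℝ) + 1 := by positivity
  set z : Fin k := (⟨0, Nat.lt_of_lt_of_le Nat.zero_lt_two hk2⟩ : Fin k) with hz
  have hm0 : m ≠ 0 := by
    obtain ⟨c, hc⟩ : ∃ c : ℤ, m = 2 * c + 1 := ⟨((n : ℤ) + 1) * l + L, by rw [hm]; ring⟩
    omega
  have hfmem : ∀ j : Fin k, Int.fract ((m : ℝ) * θ j) ∈ Set.Ioo (0 : ℝ) 1 := by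
    intro j
    have hir : Irrational ((m : ℝ) * θ j) := (hθ j).intCast_mul hm0
    refine ⟨?_, Int.fract_lt_one _⟩
    rcases (Int.fract_nonneg ((m : ℝ) * θ j)).lt_or_eq with h | h
    · exact h
    · exfalso
      apply hir.ne_int ⌊(m : ℝ) * θ j⌋
      have h2 := Int.self_sub_floor ((m : ℝ) * θ j)
      rw [← h] at h2
      linarith
  have hcard : (Finset.univ.erase z).card = k - 1 := by
    rw [Finset.card_erase_of_mem (Finset.mem_univ z), Finset.card_univ, Fintype.card_fin]
  have hne : (Finset.univ.erase z).Nonempty := by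
    rw [← Finset.card_pos, hcard]; omega
  have hSdef : S = ∑ j ∈ Finset.univ.erase z, Int.fract ((m : ℝ) * θ j) := hS
  have hSpos : 0 < S := by
    rw [hSdef]; exact Finset.sum_pos (fun j _ => (hfmem j).1) hne
  have hSlt : S < (k : ℝ) - 1 := by
    rw [hSdef]
    calc ∑ j ∈ Finset.univ.erase z, Int.fract ((m : ℝ) * θ j)
        < ∑ _j ∈ Finset.univ.erase z, (1 : ℝ) :=
          Finset.sum_lt_sum_of_nonempty hne (fun j _ => (hfmem j).2)
      _ = ((k - 1 : ℕ) : ℝ) := by rw [Finset.sum_const, hcard]; simp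
      _ = (k : ℝ) - 1 := by rw [Nat.cast_sub (by omega)]; norm_num
  set f0 : ℝ := Int.fract ((m : ℝ) * θ z) with hf0def
  have hf0mem := hfmem z
  have hmr : (m : ℝ) = 2 * ((n : ℝ) + 1) * (l : ℝ) + 2 * (L : ℝ) + 1 := by
    exact_mod_cast congrArg (Int.cast : ℤ → ℝ) hm
  have hsumfract : ∑ j, Int.fract ((m : ℝ) * θ j) = f0 + S := by
    rw [hSdef]
    exact (Finset.add_sum_erase _ (fun j => Int.fract ((m : ℝ) * θ j))
      (Finset.mem_univ z)).symm
  have hsplit : f0 + S = (m : ℝ) * ∑ j, θ j - ∑ j, (⌊(m : ℝ) * θ j⌋ : ℝ) := by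
    rw [← hsumfract, Finset.mul_sum, ← Finset.sum_sub_distrib]
    exact Finset.sum_congr rfl fun j _ => (Int.self_sub_floor _).symm
  set B : ℤ := (∑ j, ⌊(m : ℝ) * θ j⌋) - (((n : ℤ) + 1) * l + L) * k - (n : ℤ) * l with hB
  have hMQ : (m : ℝ) * (1 / 2 * ((k : ℝ) + (n : ℝ) / (n + 1))) - Q
      = (((((n : ℤ) + 1) * l + L) * k + (n : ℤ) * l : ℤ) : ℝ) := by
    rw [hQ, hmr]
    push_cast
    field_simp
    ring
  have hkey : f0 + S = Q - (B : ℝ) := by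
    rw [hsplit, hsum, hB]
    push_cast
    push_cast at hMQ
    linarith
  have hmn : (m : ℝ) * (n : ℝ) / ((n : ℝ) + 1) = 2 * (n : ℝ) * l + 2 * Q - k := by
    rw [hQ, hmr]
    field_simp
    ring
  have hindQ : ind = 2 * (n : ℝ) * l + 2 * Q - 2 * (f0 + S) := by
    rw [hind, hmn, hsumfract]
    ring
  have hfq : Int.fract Q = Q - (⌊Q⌋ : ℝ) := (Int.self_sub_floor Q).symm
  set t : ℝ := Int.fract Q + (i : ℝ) - S with ht
  have hiff1 : (ind = 2 * (n : ℝ) * l + 2 * (⌊Q⌋ : ℝ) - 2 * i) ↔ f0 = t := by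
    rw [hindQ, ht, hfq]
    constructor <;> intro h <;> linarith
  have hC : f0 - t = ((⌊Q⌋ - (i : ℤ) - B : ℤ) : ℝ) := by
    push_cast
    rw [ht, hfq]
    linarith [hkey]
  have hiff2 : f0 = t ↔ t ∈ Set.Ioo (0 : ℝ) 1 := by
    constructor
    · intro h; rw [← h]; exact hf0mem
    · intro h
      have h1 : ((⌊Q⌋ - (i : ℤ) - B : ℤ) : ℝ) < 1 := by
        rw [← hC]; rcases hf0mem with ⟨_, h2⟩; rcases h with ⟨h3, _⟩; linarith
      have h2 : (-1 : ℝ) < ((⌊Q⌋ - (i : ℤ) - B : ℤ) : ℝ) := by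
        rw [← hC]; rcases hf0mem with ⟨h3, _⟩; rcases h with ⟨_, h4⟩; linarith
      have h3 : (⌊Q⌋ - (i : ℤ) - B : ℤ) = 0 := by
        have := (by exact_mod_cast h1 : (⌊Q⌋ - (i : ℤ) - B : ℤ) < 1)
        have := (by exact_mod_cast h2 : (-1 : ℤ) < ⌊Q⌋ - (i : ℤ) - B)
        omega
      have : ((⌊Q⌋ - (i : ℤ) - B : ℤ) : ℝ) = 0 := by exact_mod_cast h3
      linarith [hC]
  rw [hiff1, hiff2]
  rcases hQfr with ⟨hq0, hq1⟩
  by_cases hi0 : i = 0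
  · subst hi0
    simp only [if_pos rfl, Set.mem_Ioo, ht]
    push_cast
    constructor <;> rintro ⟨h1, h2⟩ <;> constructor <;> linarith
  · by_cases hik : i ≤ k - 2
    · simp only [if_neg hi0, if_pos hik, Set.mem_Ioo, ht]
      constructor <;> rintro ⟨h1, h2⟩ <;> constructor <;> linarith
    · simp only [if_neg hi0, if_neg hik, Set.mem_Ioo, ht]
      have hik1 : i = k - 1 := by omega
      have hir : (i : ℝ) = (k : ℝ) - 1 := by
        rw [hik1, Nat.cast_sub (by omega)]; norm_num
      rw [hir]
      constructor <;> rintro ⟨h1, h2⟩ <;> constructor <;> linarith
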